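/- Every vertex of the single-edge local polytope {(η_i, η_j, η_{ij}) : 0 ≤ η_i, η_j ≤ 1, max(0, η_i + η_j − 1) ≤ η_{ij} ≤ min(η_i, η_j)} has all coordinates in {0, 1/2, 1}. -/

import Mathlib

private def feas14 (x y z : ℝ) : Prop :=
  0 ≤ x ∧ x ≤ 1 ∧ 0 ≤ y ∧ y ≤ 1 ∧ (0 ≤ z ∧ x + y - 1 ≤ z) ∧ (z ≤ x ∧ z ≤ y)

private lemma perturb14 {P : Set (ℝ × ℝ × ℝ)} {v : ℝ × ℝ × ℝ}
    (hv : v ∈ Set.extremePoints ℝ P)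
    (d : ℝ × ℝ × ℝ) (h1 : v + d ∈ P) (h2 : v - d ∈ P) : d = 0 := by
  have hseg : v ∈ openSegment ℝ (v - d) (v + d) :=
    ⟨1/2, 1/2, by norm_num, by norm_num, by norm_num, by module⟩
  have h := hv.2 h2 h1 hseg
  exact sub_eq_self.mp h

private lemma key14 (x y z : ℝ) (hf : feas14 x y z)
    (hp : ∀ a b c : ℝ, feas14 (x + a) (y + b) (z + c) →
      feas14 (x - a) (y - b) (z - c) → a = 0) :
    x = 0 ∨ x = 1 := by
  obtain ⟨h1, h2, h3, h4, ⟨h5, h6⟩, h7, h8⟩ := hf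
  by_contra hcon
  push_neg at hcon
  obtain ⟨hx0, hx1⟩ := hcon
  have hx0' : 0 < x := lt_of_le_of_ne h1 (Ne.symm hx0)
  have hx1' : x < 1 := lt_of_le_of_ne h2 hx1
  rcases lt_or_eq_of_le h7 with hzx | hzx
  · -- z < x
    rcases lt_or_eq_of_le h6 with hzl | hzl
    · -- x + y - 1 < z : move x alone
      obtain ⟨ε, hε, e1, e2, e3, e4⟩ : ∃ ε : ℝ, 0 < ε ∧ ε ≤ x ∧ ε ≤ 1 - x ∧
          ε ≤ x - z ∧ ε ≤ z - (x + y - 1) := by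
        refine ⟨min (min x (1 - x)) (min (x - z) (z - (x + y - 1))), ?_, ?_, ?_, ?_, ?_⟩
        · simp only [lt_min_iff]; refine ⟨⟨?_, ?_⟩, ?_, ?_⟩ <;> linarith
        · exact le_trans (min_le_left _ _) (min_le_left _ _)
        · exact le_trans (min_le_left _ _) (min_le_right _ _)
        · exact le_trans (min_le_right _ _) (min_le_left _ _)
        · exact le_trans (min_le_right _ _) (min_le_right _ _)
      have := hp ε 0 0
        ⟨by linarith, by linarith, by linarith, by linarith,
          ⟨by linarith, by linarith⟩, by linarith, by linarith⟩
        ⟨by linarith, by linarith, by linarith, by linarith,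
          ⟨by linarith, by linarith⟩, by linarith, by linarith⟩
      linarith
    · -- z = x + y - 1 : move x up, y down (and reverse)
      have hy1 : y < 1 := by linarith
      have hy0 : 0 < y := by linarith
      have hzy : z < y := by linarith
      obtain ⟨ε, hε, e1, e2, e3, e4, e5, e6⟩ : ∃ ε : ℝ, 0 < ε ∧ ε ≤ x ∧ ε ≤ 1 - x ∧
          ε ≤ y ∧ ε ≤ 1 - y ∧ ε ≤ x - z ∧ ε ≤ y - z := by
        refine ⟨min (min x (1 - x)) (min (min y (1 - y)) (min (x - z) (y - z))),
          ?_, ?_, ?_, ?_, ?_, ?_, ?_⟩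
        · simp only [lt_min_iff]; refine ⟨⟨?_, ?_⟩, ⟨?_, ?_⟩, ?_, ?_⟩ <;> linarith
        · exact le_trans (min_le_left _ _) (min_le_left _ _)
        · exact le_trans (min_le_left _ _) (min_le_right _ _)
        · exact le_trans (min_le_right _ _) (le_trans (min_le_left _ _) (min_le_left _ _))
        · exact le_trans (min_le_right _ _) (le_trans (min_le_left _ _) (min_le_right _ _))
        · exact le_trans (min_le_right _ _) (le_trans (min_le_right _ _) (min_le_left _ _))
        · exact le_trans (min_le_right _ _) (le_trans (min_le_right _ _) (min_le_right _ _))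
      have := hp ε (-ε) 0
        ⟨by linarith, by linarith, by linarith, by linarith,
          ⟨by linarith, by linarith⟩, by linarith, by linarith⟩
        ⟨by linarith, by linarith, by linarith, by linarith,
          ⟨by linarith, by linarith⟩, by linarith, by linarith⟩
      linarith
  · -- z = x
    rcases lt_or_eq_of_le (hzx ▸ h8 : x ≤ y) with hxy | hxy
    · -- x < y : move x and z together
      obtain ⟨ε, hε, e1, e2, e3⟩ : ∃ ε : ℝ, 0 < ε ∧ ε ≤ x ∧ ε ≤ 1 - x ∧ ε ≤ y - x := by
        refine ⟨min (min x (1 - x)) (y - x), ?_, ?_, ?_, ?_⟩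
        · simp only [lt_min_iff]; refine ⟨⟨?_, ?_⟩, ?_⟩ <;> linarith
        · exact le_trans (min_le_left _ _) (min_le_left _ _)
        · exact le_trans (min_le_left _ _) (min_le_right _ _)
        · exact min_le_right _ _
      have := hp ε 0 ε
        ⟨by linarith, by linarith, by linarith, by linarith,
          ⟨by linarith, by linarith⟩, by linarith, by linarith⟩
        ⟨by linarith, by linarith, by linarith, by linarith,
          ⟨by linarith, by linarith⟩, by linarith, by linarith⟩
      linarith
    · -- x = y = z : move all together
      obtain ⟨ε, hε, e1, e2⟩ : ∃ ε : ℝ, 0 < ε ∧ ε ≤ x ∧ ε ≤ 1 - x := by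
        refine ⟨min x (1 - x), ?_, min_le_left _ _, min_le_right _ _⟩
        simp only [lt_min_iff]; exact ⟨hx0', by linarith⟩
      have := hp ε ε ε
        ⟨by linarith, by linarith, by linarith, by linarith,
          ⟨by linarith, by linarith⟩, by linarith, by linarith⟩
        ⟨by linarith, by linarith, by linarith, by linarith,
          ⟨by linarith, by linarith⟩, by linarith, by linarith⟩
      linarith

/-- Every vertex (extreme point) of the single-edge local polytope is half-integral. -/
theorem stmt_14 (P : Set (ℝ × ℝ × ℝ))
    (hP : P = {p | 0 ≤ p.1 ∧ p.1 ≤ 1 ∧ 0 ≤ p.2.1 ∧ p.2.1 ≤ 1 ∧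
      max 0 (p.1 + p.2.1 - 1) ≤ p.2.2 ∧ p.2.2 ≤ min p.1 p.2.1}) :
    ∀ v ∈ Set.extremePoints ℝ P,
      v.1 ∈ ({0, 1/2, 1} : Set ℝ) ∧ v.2.1 ∈ ({0, 1/2, 1} : Set ℝ) ∧
      v.2.2 ∈ ({0, 1/2, 1} : Set ℝ) := by
  intro v hv
  obtain ⟨x, y, z⟩ := v
  have hmem : ∀ a b c : ℝ, ((a, b, c) : ℝ × ℝ × ℝ) ∈ P ↔ feas14 a b c := by
    intro a b c
    rw [hP]
    simp [feas14, max_le_iff, le_min_iff]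
  have hf : feas14 x y z := (hmem x y z).mp hv.1
  have hp : ∀ a b c : ℝ, feas14 (x + a) (y + b) (z + c) →
      feas14 (x - a) (y - b) (z - c) → (a = 0 ∧ b = 0 ∧ c = 0) := by
    intro a b c hf1 hf2
    have h1 : ((x, y, z) : ℝ × ℝ × ℝ) + (a, b, c) ∈ P := (hmem _ _ _).mpr hf1
    have h2 : ((x, y, z) : ℝ × ℝ × ℝ) - (a, b, c) ∈ P := (hmem _ _ _).mpr hf2
    have hd := perturb14 hv (a, b, c) h1 h2
    have := Prod.mk.injEq .. ▸ hd
    refine ⟨?_, ?_, ?_⟩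
    · exact congrArg Prod.fst hd
    · exact congrArg Prod.fst (congrArg Prod.snd hd)
    · exact congrArg Prod.snd (congrArg Prod.snd hd)
  obtain ⟨h1, h2, h3, h4, ⟨h5, h6⟩, h7, h8⟩ := hf
  have hx : x = 0 ∨ x = 1 := key14 x y z ⟨h1, h2, h3, h4, ⟨h5, h6⟩, h7, h8⟩
    (fun a b c hfa hfb => (hp a b c hfa hfb).1)
  have hy : y = 0 ∨ y = 1 := by
    refine key14 y x z ⟨h3, h4, h1, h2, ⟨h5, by linarith⟩, h8, h7⟩ ?_
    intro a b c hfa hfb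
    obtain ⟨f1, f2, f3, f4, ⟨f5, f6⟩, f7, f8⟩ := hfa
    obtain ⟨g1, g2, g3, g4, ⟨g5, g6⟩, g7, g8⟩ := hfb
    exact (hp b a c ⟨f3, f4, f1, f2, ⟨f5, by linarith⟩, f8, f7⟩
      ⟨g3, g4, g1, g2, ⟨g5, by linarith⟩, g8, g7⟩).2.1
  have hz : z = 0 ∨ z = 1 := by
    rcases hx with h | h <;> rcases hy with h' | h'
    · left; linarith
    · left; linarith
    · left; linarith
    · right; linarith
  simp only [Set.mem_insert_iff, Set.mem_singleton_iff]
  refine ⟨?_, ?_, ?_⟩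
  · rcases hx with h | h
    · exact Or.inl h
    · exact Or.inr (Or.inr h)
  · rcases hy with h | h
    · exact Or.inl h
    · exact Or.inr (Or.inr h)
  · rcases hz with h | h
    · exact Or.inl h
    · exact Or.inr (Or.inr h)
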